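/- Let P ∈ ℤ[T] be a nonconstant polynomial that is irreducible in ℚ[T], and suppose that −3 is a square in the field ℚ[T]/(P(T)) (i.e., the third roots of unity are contained in this field). Then there exists a finite set S of primes such that for every prime p ∉ S and every integer t with p dividing P(t), the Legendre symbol (−3/p) equals +1. -/

import Mathlib

open Polynomial

/-- Clearing denominators of a rational polynomial. -/
lemma exists_int_scale (q : ℚ[X]) :
    ∃ (n : ℤ) (Q : ℤ[X]), n ≠ 0 ∧ Q.map (Int.castRingHom ℚ) = (n : ℚ) • q := by
  obtain ⟨b, hb⟩ := IsLocalization.integerNormalization_map_to_map (nonZeroDivisors ℤ) q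
  refine ⟨(b : ℤ), IsLocalization.integerNormalization (nonZeroDivisors ℤ) q,
    nonZeroDivisors.coe_ne_zero b, ?_⟩
  rw [← algebraMap_int_eq, hb]
  exact (Int.cast_smul_eq_zsmul ℚ _ _).symm

/-- If `P ∈ ℤ[T]` is nonconstant, irreducible over `ℚ`, and `-3` is a square in the
number field `ℚ[T]/(P)`, then for all but finitely many primes `p`, every prime
divisor `p` of a value `P(t)` satisfies `(-3/p) = 1`. -/
theorem stmt_7 (P : Polynomial ℤ) (hPdeg : 0 < P.natDegree)
    (hPirr : Irreducible (P.map (Int.castRingHom ℚ)))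
    (hsq : IsSquare (-3 : AdjoinRoot (P.map (Int.castRingHom ℚ)))) :
    ∃ S : Finset ℕ, ∀ (p : ℕ) (hp : p.Prime), p ∉ S →
      ∀ t : ℤ, (p : ℤ) ∣ P.eval t → @legendreSym p ⟨hp⟩ (-3) = 1 := by
  set f := P.map (Int.castRingHom ℚ) with hf
  obtain ⟨r, hr⟩ := hsq
  obtain ⟨g, rfl⟩ := AdjoinRoot.mk_surjective r
  have hdvd : f ∣ g * g + 3 := by
    rw [← AdjoinRoot.mk_eq_zero]
    have h3 : AdjoinRoot.mk f (g * g + 3) = AdjoinRoot.mk f g * AdjoinRoot.mk f g + 3 := by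
      simp [map_add, map_mul, map_ofNat]
    rw [h3, ← hr]; ring
  obtain ⟨h, hh⟩ := hdvd
  obtain ⟨d, G, hd, hG⟩ := exists_int_scale g
  obtain ⟨e, H, he, hH⟩ := exists_int_scale h
  refine ⟨(3 * d * e).natAbs.divisors, ?_⟩
  intro p hp hpS t hpt
  haveI : Fact p.Prime := ⟨hp⟩
  have h3de : ¬ ((p : ℤ) ∣ 3 * d * e) := by
    intro hdvd'
    exact hpS (Nat.mem_divisors.mpr ⟨Int.natCast_dvd_natCast.mp (
      Int.dvd_natAbs.mpr hdvd'), by positivity⟩)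
  -- the key integer identity evaluated at t
  have key : e * (G.eval t) ^ 2 + 3 * d ^ 2 * e = P.eval t * (H.eval t) * d ^ 2 := by
    have hgt : ((G.eval t : ℤ) : ℚ) = (d : ℚ) * g.eval (t : ℚ) := by
      have h1 := congrArg (Polynomial.eval ((t : ℤ) : ℚ)) hG
      rw [Polynomial.eval_intCast_map, eval_smul, smul_eq_mul, eq_intCast] at h1
      exact h1
    have hht : ((H.eval t : ℤ) : ℚ) = (e : ℚ) * h.eval (t : ℚ) := by
      have h1 := congrArg (Polynomial.eval ((t : ℤ) : ℚ)) hH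
      rw [Polynomial.eval_intCast_map, eval_smul, smul_eq_mul, eq_intCast] at h1
      exact h1
    have hft : ((P.eval t : ℤ) : ℚ) = f.eval (t : ℚ) := by
      rw [hf, Polynomial.eval_intCast_map, eq_intCast, Int.cast_id]
    have heval : g.eval (t : ℚ) * g.eval (t : ℚ) + 3 = f.eval (t : ℚ) * h.eval (t : ℚ) := by
      have h1 := congrArg (Polynomial.eval ((t : ℤ) : ℚ)) hh
      simpa using h1
    have hq : ((e * (G.eval t) ^ 2 + 3 * d ^ 2 * e : ℤ) : ℚ)
        = ((P.eval t * (H.eval t) * d ^ 2 : ℤ) : ℚ) := by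
      push_cast
      rw [hgt, hht, hft]
      linear_combination ((e : ℚ) * (d : ℚ) ^ 2) * heval
    exact_mod_cast hq
  -- now work modulo p
  have hde : ((d * e : ℤ) : ZMod p) ≠ 0 := by
    rw [Ne, ZMod.intCast_zmod_eq_zero_iff_dvd]
    intro hdvd'
    exact h3de (hdvd'.trans ⟨3, by ring⟩)
  have hPt0 : ((P.eval t : ℤ) : ZMod p) = 0 := (ZMod.intCast_zmod_eq_zero_iff_dvd _ _).mpr hpt
  have hk : ((e : ℤ) : ZMod p) * ((G.eval t : ℤ) : ZMod p) ^ 2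
      + 3 * ((d : ℤ) : ZMod p) ^ 2 * ((e : ℤ) : ZMod p) = 0 := by
    have h1 := congrArg (fun n : ℤ => (n : ZMod p)) key
    push_cast at h1
    rw [hPt0] at h1
    simpa using h1
  have h2 : (((e * G.eval t : ℤ)) : ZMod p) ^ 2 = -3 * (((d * e : ℤ)) : ZMod p) ^ 2 := by
    push_cast
    push_cast at hk
    linear_combination ((e : ℤ) : ZMod p) * hk
  have hsq' : IsSquare ((-3 : ℤ) : ZMod p) := by
    refine ⟨((e * G.eval t : ℤ) : ZMod p) * ((d * e : ℤ) : ZMod p)⁻¹, ?_⟩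
    have hc : ((-3 : ℤ) : ZMod p) = -3 := by push_cast; ring
    rw [hc]
    have huu : ((d * e : ℤ) : ZMod p) * ((d * e : ℤ) : ZMod p)⁻¹ = 1 := mul_inv_cancel₀ hde
    set u := ((d * e : ℤ) : ZMod p) with hu
    set X := ((e * G.eval t : ℤ) : ZMod p) with hX
    calc (-3 : ZMod p) = -3 * ((u * u⁻¹) * (u * u⁻¹)) := by rw [huu]; ring
      _ = X * u⁻¹ * (X * u⁻¹) := by linear_combination (-(u⁻¹ * u⁻¹)) * h2
  have h30 : ((-3 : ℤ) : ZMod p) ≠ 0 := by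
    rw [Ne, ZMod.intCast_zmod_eq_zero_iff_dvd]
    intro hdvd'
    exact h3de ((dvd_neg.mpr hdvd').trans ⟨d * e, by ring⟩)
  exact (legendreSym.eq_one_iff p h30).mpr hsq'
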